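/- Let p be a prime, d ≥ 1, and x_1,…,x_d ∈ F_p(x) with x_1,…,x_d ∉ F_p and x_1−1,…,x_d−1 ∉ F_p. Then f(x_1−1,…,x_d−1) − f(x_1,…,x_d) = (1/(x_1−1))·f(x_2−1,…,x_d−1) − (1/x_d)·f(x_1,…,x_{d−1}). -/

import Mathlib

open Finset


/-- `f(x₁, …, x_d) = ∑_{0 < n₁ < ⋯ < n_d < p} 1/((n₁ - x₁) ⋯ (n_d - x_d))` in the rational
function field `𝔽_p(x)`, for a list of arguments `xs = [x₁, …, x_d]`; `f [] = 1`. -/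
noncomputable def f (p : ℕ) [Fact p.Prime] (xs : List (RatFunc (ZMod p))) :
    RatFunc (ZMod p) :=
  ∑ n ∈ Finset.univ.filter
      (fun n : Fin xs.length → Fin p =>
        (∀ i j : Fin xs.length, i < j → n i < n j) ∧ ∀ i, (n i : ℕ) ≠ 0),
    ∏ i, (((n i : ℕ) : RatFunc (ZMod p)) - xs.get i)⁻¹

variable (p : ℕ) [Fact p.Prime]

noncomputable def hh (d : ℕ) (y : Fin d → RatFunc (ZMod p)) (A : Finset ℕ) : RatFunc (ZMod p) :=
  ∑ n ∈ (Fintype.piFinset fun _ : Fin d => A).filter StrictMono,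
    ∏ i, (((n i : ℕ) : RatFunc (ZMod p)) - y i)⁻¹

lemma hh_zero (y : Fin 0 → RatFunc (ZMod p)) (A : Finset ℕ) : hh p 0 y A = 1 := by
  simp [hh, Finset.filter_true_of_mem fun n _ => Subsingleton.strictMono n]


lemma hh_shift (d : ℕ) (y : Fin d → RatFunc (ZMod p)) (A : Finset ℕ) :
    hh p d (fun i => y i - 1) A = hh p d y (A.image (· + 1)) := by
  unfold hh
  refine Finset.sum_nbij' (fun n k => n k + 1) (fun n k => n k - 1) ?_ ?_ ?_ ?_ ?_
  · intro n hn
    simp only [Finset.mem_filter, Fintype.mem_piFinset] at hn ⊢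
    refine ⟨fun k => Finset.mem_image_of_mem _ (hn.1 k), fun i j hij => ?_⟩
    have := hn.2 hij
    simp only; omega
  · intro n hn
    simp only [Finset.mem_filter, Fintype.mem_piFinset, Finset.mem_image] at hn ⊢
    refine ⟨fun k => ?_, fun i j hij => ?_⟩
    · obtain ⟨a, ha, hak⟩ := hn.1 k
      have : n k - 1 = a := by omega
      show n k - 1 ∈ A
      rwa [this]
    · have h1 := hn.2 hij
      obtain ⟨a, ha, hak⟩ := hn.1 j
      obtain ⟨b, hb, hbk⟩ := hn.1 i
      simp only; omega
  · intro n hn; funext k; simp only; omega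
  · intro n hn
    simp only [Finset.mem_filter, Fintype.mem_piFinset, Finset.mem_image] at hn
    funext k
    obtain ⟨a, ha, hak⟩ := hn.1 k
    simp only; omega
  · intro n hn
    refine Finset.prod_congr rfl fun i _ => ?_
    push_cast
    ring_nf

lemma hh_insert_max (d : ℕ) (y : Fin (d + 1) → RatFunc (ZMod p)) (A : Finset ℕ) (M : ℕ)
    (hM : ∀ a ∈ A, a < M) :
    hh p (d + 1) y (insert M A)
      = hh p (d + 1) y A
        + ((M : RatFunc (ZMod p)) - y (Fin.last d))⁻¹ * hh p d (fun i => y i.castSucc) A := by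
  have hMA : M ∉ A := fun h => lt_irrefl M (hM M h)
  unfold hh
  rw [← Finset.sum_filter_add_sum_filter_not
    ((Fintype.piFinset fun _ : Fin (d+1) => insert M A).filter StrictMono)
    (fun n => n (Fin.last d) = M), add_comm]
  congr 1
  · -- n last ≠ M part equals hh over A
    have : ((Fintype.piFinset fun _ : Fin (d+1) => insert M A).filter StrictMono).filter
        (fun n => ¬ n (Fin.last d) = M)
        = (Fintype.piFinset fun _ : Fin (d+1) => A).filter StrictMono := by
      ext n
      simp only [Finset.mem_filter, Fintype.mem_piFinset, Finset.mem_insert]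
      constructor
      · rintro ⟨⟨hmem, hmono⟩, hlast⟩
        refine ⟨fun k => ?_, hmono⟩
        rcases hmem k with hk | hk
        · -- n k = M: then k = last or contradiction
          rcases eq_or_lt_of_le (Fin.le_last k) with hkl | hkl
          · exact absurd (hkl ▸ hk) hlast
          · have := hmono hkl
            rcases hmem (Fin.last d) with hl | hl
            · exact absurd hl hlast
            · exact absurd (hk ▸ this) (not_lt.2 (le_of_lt (hM _ hl)))
        · exact hk
      · rintro ⟨hmem, hmono⟩
        exact ⟨⟨fun k => Or.inr (hmem k), hmono⟩, fun h => hMA (h ▸ hmem (Fin.last d))⟩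
    rw [this]
  · -- n last = M part
    rw [Finset.mul_sum]
    refine Finset.sum_nbij' (fun n => n ∘ Fin.castSucc) (fun m => Fin.snoc m M) ?_ ?_ ?_ ?_ ?_
    · intro n hn
      simp only [Finset.mem_filter, Fintype.mem_piFinset, Finset.mem_insert] at hn ⊢
      obtain ⟨⟨hmem, hmono⟩, hlast⟩ := hn
      refine ⟨fun k => ?_, hmono.comp Fin.strictMono_castSucc⟩
      rcases hmem k.castSucc with hk | hk
      · have : n k.castSucc < n (Fin.last d) := hmono (Fin.castSucc_lt_last k)
        rw [hlast] at this
        exact absurd hk (by omega)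
      · exact hk
    · intro m hm
      simp only [Finset.mem_filter, Fintype.mem_piFinset, Finset.mem_insert] at hm ⊢
      obtain ⟨hmem, hmono⟩ := hm
      refine ⟨⟨fun k => ?_, fun i j hij => ?_⟩, Fin.snoc_last _ _⟩
      · rcases eq_or_lt_of_le (Fin.le_last k) with hkl | hkl
        · rw [hkl, Fin.snoc_last]; exact Or.inl rfl
        · obtain ⟨k', rfl⟩ := Fin.exists_castSucc_eq.mpr (Fin.ne_last_of_lt hkl)
          rw [Fin.snoc_castSucc]; exact Or.inr (hmem k')
      · rcases eq_or_lt_of_le (Fin.le_last j) with hjl | hjl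
        · obtain ⟨i', rfl⟩ := Fin.exists_castSucc_eq.mpr (Fin.ne_last_of_lt (hjl ▸ hij))
          rw [hjl, Fin.snoc_last, Fin.snoc_castSucc]
          exact hM _ (hmem i')
        · obtain ⟨j', rfl⟩ := Fin.exists_castSucc_eq.mpr (Fin.ne_last_of_lt hjl)
          obtain ⟨i', rfl⟩ := Fin.exists_castSucc_eq.mpr
            (Fin.ne_last_of_lt (lt_trans hij (Fin.castSucc_lt_last j')))
          rw [Fin.snoc_castSucc, Fin.snoc_castSucc]
          exact hmono (by exact_mod_cast hij)
    · intro n hn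
      simp only [Finset.mem_filter] at hn
      rw [← hn.2]
      exact Fin.snoc_init_self n
    · intro m hm
      funext k
      simp [Fin.snoc_castSucc]
    · intro n hn
      simp only [Finset.mem_filter] at hn
      rw [Fin.prod_univ_castSucc, hn.2, mul_comm]
      rfl

lemma hh_insert_min (d : ℕ) (y : Fin (d + 1) → RatFunc (ZMod p)) (A : Finset ℕ) (m : ℕ)
    (hm : ∀ a ∈ A, m < a) :
    hh p (d + 1) y (insert m A)
      = hh p (d + 1) y A
        + ((m : RatFunc (ZMod p)) - y 0)⁻¹ * hh p d (fun i => y i.succ) A := by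
  have hmA : m ∉ A := fun h => lt_irrefl m (hm m h)
  unfold hh
  rw [← Finset.sum_filter_add_sum_filter_not
    ((Fintype.piFinset fun _ : Fin (d+1) => insert m A).filter StrictMono)
    (fun n => n 0 = m), add_comm]
  congr 1
  · have : ((Fintype.piFinset fun _ : Fin (d+1) => insert m A).filter StrictMono).filter
        (fun n => ¬ n 0 = m)
        = (Fintype.piFinset fun _ : Fin (d+1) => A).filter StrictMono := by
      ext n
      simp only [Finset.mem_filter, Fintype.mem_piFinset, Finset.mem_insert]
      constructor
      · rintro ⟨⟨hmem, hmono⟩, h0⟩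
        refine ⟨fun k => ?_, hmono⟩
        rcases hmem k with hk | hk
        · rcases eq_or_lt_of_le (Fin.zero_le k) with hk0 | hk0
          · exact absurd (hk0 ▸ hk) h0
          · have := hmono hk0
            rcases hmem 0 with hl | hl
            · exact absurd hl h0
            · exact absurd (hk ▸ this) (not_lt.2 (le_of_lt (hm _ hl)))
        · exact hk
      · rintro ⟨hmem, hmono⟩
        exact ⟨⟨fun k => Or.inr (hmem k), hmono⟩, fun h => hmA (h ▸ hmem 0)⟩
    rw [this]
  · rw [Finset.mul_sum]
    refine Finset.sum_nbij' (fun n => n ∘ Fin.succ) (fun v => Fin.cons m v) ?_ ?_ ?_ ?_ ?_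
    · intro n hn
      simp only [Finset.mem_filter, Fintype.mem_piFinset, Finset.mem_insert] at hn ⊢
      obtain ⟨⟨hmem, hmono⟩, h0⟩ := hn
      refine ⟨fun k => ?_, hmono.comp Fin.strictMono_succ⟩
      rcases hmem k.succ with hk | hk
      · have : n 0 < n k.succ := hmono (Fin.succ_pos k)
        rw [h0] at this
        exact absurd hk (by omega)
      · exact hk
    · intro v hv
      simp only [Finset.mem_filter, Fintype.mem_piFinset, Finset.mem_insert] at hv ⊢
      obtain ⟨hmem, hmono⟩ := hv
      refine ⟨⟨fun k => ?_, fun i j hij => ?_⟩, Fin.cons_zero _ _⟩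
      · rcases eq_or_lt_of_le (Fin.zero_le k) with hk0 | hk0
        · rw [← hk0, Fin.cons_zero]; exact Or.inl rfl
        · obtain ⟨k', rfl⟩ := Fin.exists_succ_eq_of_ne_zero (Fin.pos_iff_ne_zero.mp hk0)
          rw [Fin.cons_succ]; exact Or.inr (hmem k')
      · rcases eq_or_lt_of_le (Fin.zero_le i) with hi0 | hi0
        · obtain ⟨j', rfl⟩ := Fin.exists_succ_eq_of_ne_zero
            (Fin.pos_iff_ne_zero.mp (lt_of_le_of_lt (hi0.le) hij))
          rw [← hi0, Fin.cons_zero, Fin.cons_succ]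
          exact hm _ (hmem j')
        · obtain ⟨i', rfl⟩ := Fin.exists_succ_eq_of_ne_zero (Fin.pos_iff_ne_zero.mp hi0)
          obtain ⟨j', rfl⟩ := Fin.exists_succ_eq_of_ne_zero
            (Fin.pos_iff_ne_zero.mp (lt_trans (Fin.succ_pos i') hij))
          rw [Fin.cons_succ, Fin.cons_succ]
          exact hmono (Fin.succ_lt_succ_iff.mp hij)
    · intro n hn
      simp only [Finset.mem_filter] at hn
      rw [← hn.2]
      exact Fin.cons_self_tail n
    · intro v hv
      funext k
      simp [Fin.cons_succ]
    · intro n hn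
      simp only [Finset.mem_filter] at hn
      rw [Fin.prod_univ_succ, hn.2]
      rfl

lemma p_cast_zero : ((p : ℕ) : RatFunc (ZMod p)) = 0 := by
  rw [← map_natCast (RatFunc.C (K := ZMod p)) p, ZMod.natCast_self, map_zero]

lemma image_Ioo : (Finset.Ioo 0 p).image (· + 1) = insert p (Finset.Ioo 1 p) := by
  have := (Fact.out : p.Prime).two_le
  ext a
  simp only [Finset.mem_image, Finset.mem_insert, Finset.mem_Ioo]
  constructor
  · rintro ⟨b, hb, rfl⟩; omega
  · intro h
    rcases h with h | h
    · exact ⟨p - 1, by omega⟩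
    · exact ⟨a - 1, by omega⟩

lemma Ioo_insert : Finset.Ioo 0 p = insert 1 (Finset.Ioo 1 p) := by
  have := (Fact.out : p.Prime).two_le
  ext a
  simp only [Finset.mem_insert, Finset.mem_Ioo]
  omega

lemma key (d : ℕ) (y : Fin (d + 1) → RatFunc (ZMod p)) :
    hh p (d + 1) (fun i => y i - 1) (Finset.Ioo 0 p) - hh p (d + 1) y (Finset.Ioo 0 p)
      = (y 0 - 1)⁻¹ * hh p d (fun i => y i.succ - 1) (Finset.Ioo 0 p)
        - (y (Fin.last d))⁻¹ * hh p d (fun i => y i.castSucc) (Finset.Ioo 0 p) := by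
  have hmax : ∀ a ∈ Finset.Ioo 1 p, a < p := fun a ha => (Finset.mem_Ioo.mp ha).2
  have hmin : ∀ a ∈ Finset.Ioo 1 p, 1 < a := fun a ha => (Finset.mem_Ioo.mp ha).1
  have e1 : ∀ (e : ℕ) (z : Fin (e + 1) → RatFunc (ZMod p)),
      hh p (e + 1) (fun i => z i - 1) (Finset.Ioo 0 p)
        = hh p (e + 1) z (Finset.Ioo 1 p)
          - (z (Fin.last e))⁻¹ * hh p e (fun i => z i.castSucc) (Finset.Ioo 1 p) := by
    intro e z
    rw [hh_shift, image_Ioo, hh_insert_max p e z _ p hmax, p_cast_zero]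
    ring
  have e2 : ∀ (e : ℕ) (z : Fin (e + 1) → RatFunc (ZMod p)),
      hh p (e + 1) z (Finset.Ioo 0 p)
        = hh p (e + 1) z (Finset.Ioo 1 p)
          - (z 0 - 1)⁻¹ * hh p e (fun i => z i.succ) (Finset.Ioo 1 p) := by
    intro e z
    rw [Ioo_insert, hh_insert_min p e z _ 1 hmin, Nat.cast_one]
    have : ((1 : RatFunc (ZMod p)) - z 0)⁻¹ = -(z 0 - 1)⁻¹ := by
      rw [← inv_neg]; ring_nf
    rw [this]; ring
  rw [e1 d y, e2 d y]
  cases d with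
  | zero =>
      rw [hh_zero, hh_zero, hh_zero, hh_zero]
      have h0 : (Fin.last 0 : Fin 1) = 0 := rfl
      rw [h0]
      ring
  | succ e =>
      rw [e1 e (fun i => y i.succ), e2 e (fun i => y i.castSucc)]
      have hmid : (fun i : Fin e => y (i.castSucc).succ) = (fun i : Fin e => y (i.succ).castSucc) := by
        funext i; rw [Fin.succ_castSucc]
      have hl : y (Fin.last e).succ = y (Fin.last (e+1)) := by
        rw [Fin.succ_last]
      have h0 : y (Fin.castSucc (0 : Fin (e+1))) = y 0 := by
        rw [Fin.castSucc_zero]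
      rw [hmid, hl, h0]
      ring

lemma f_eq_hh (xs : List (RatFunc (ZMod p))) :
    f p xs = hh p xs.length xs.get (Finset.Ioo 0 p) := by
  have hp : 0 < p := (Fact.out : p.Prime).pos
  unfold f hh
  refine Finset.sum_nbij' (fun n k => (n k : ℕ)) (fun m k => ⟨m k % p, Nat.mod_lt _ hp⟩)
    ?_ ?_ ?_ ?_ ?_
  · intro n hn
    simp only [Finset.mem_filter, Finset.mem_univ, true_and] at hn
    simp only [Finset.mem_filter, Fintype.mem_piFinset, Finset.mem_Ioo]
    exact ⟨fun k => ⟨Nat.pos_of_ne_zero (hn.2 k), (n k).isLt⟩,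
      fun i j hij => hn.1 i j hij⟩
  · intro m hm
    simp only [Finset.mem_filter, Fintype.mem_piFinset, Finset.mem_Ioo] at hm
    simp only [Finset.mem_filter, Finset.mem_univ, true_and]
    constructor
    · intro i j hij
      have h1 := (hm.1 i).2
      have h2 := (hm.1 j).2
      have := hm.2 hij
      simp only [Fin.mk_lt_mk, Nat.mod_eq_of_lt h1, Nat.mod_eq_of_lt h2]
      exact this
    · intro i
      have h1 := hm.1 i
      show m i % p ≠ 0
      rw [Nat.mod_eq_of_lt h1.2]
      omega
  · intro n hn
    funext k
    apply Fin.ext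
    simp [Nat.mod_eq_of_lt (n k).isLt]
  · intro m hm
    simp only [Finset.mem_filter, Fintype.mem_piFinset, Finset.mem_Ioo] at hm
    funext k
    have := (hm.1 k).2
    simp [Nat.mod_eq_of_lt this]
  · intro n hn
    rfl

lemma hh_ext {d d' : ℕ} (h : d = d') (y : Fin d → RatFunc (ZMod p))
    (y' : Fin d' → RatFunc (ZMod p)) (hy : ∀ i : Fin d', y (Fin.cast h.symm i) = y' i)
    (A : Finset ℕ) : hh p d y A = hh p d' y' A := by
  subst h
  rw [show y = y' from funext fun i => hy i]


/-- For a prime `p`, `d ≥ 1` and `x₁, …, x_d ∈ 𝔽_p(x)` with all `xᵢ ∉ 𝔽_p` and all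
`xᵢ - 1 ∉ 𝔽_p`, one has
`f(x₁-1,…,x_d-1) - f(x₁,…,x_d) = (x₁-1)⁻¹ f(x₂-1,…,x_d-1) - x_d⁻¹ f(x₁,…,x_{d-1})`. -/


theorem f_translation_identity (p : ℕ) [Fact p.Prime]
    (xs : List (RatFunc (ZMod p))) (hne : xs ≠ [])
    (h1 : ∀ y ∈ xs, ∀ c : ZMod p, y ≠ RatFunc.C c)
    (h2 : ∀ y ∈ xs, ∀ c : ZMod p, y - 1 ≠ RatFunc.C c) :
    f p (xs.map (· - 1)) - f p xs
      = (xs.headD 0 - 1)⁻¹ * f p (xs.tail.map (· - 1))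
        - (xs.getLastD 0)⁻¹ * f p xs.dropLast := by
  cases xs with
  | nil => exact absurd rfl hne
  | cons x t =>
    have A1 : f p ((x :: t).map (· - 1))
        = hh p (t.length + 1) (fun i => (x :: t).get i - 1) (Finset.Ioo 0 p) := by
      rw [f_eq_hh]
      exact hh_ext p (by simp) _ _ (fun i => by
        simp only [List.get_eq_getElem, List.getElem_map, Fin.coe_cast]) _
    have A2 : f p (x :: t) = hh p (t.length + 1) ((x :: t).get) (Finset.Ioo 0 p) :=
      f_eq_hh p _
    have A3 : f p (((x :: t).tail).map (· - 1))
        = hh p t.length (fun i => (x :: t).get i.succ - 1) (Finset.Ioo 0 p) := by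
      rw [f_eq_hh]
      exact hh_ext p (by simp) _ _ (fun i => by
        simp only [List.get_eq_getElem, List.getElem_map, Fin.coe_cast, List.tail_cons,
          Fin.val_succ, List.getElem_cons_succ]; rfl) _
    have A4 : f p ((x :: t).dropLast)
        = hh p t.length (fun i => (x :: t).get i.castSucc) (Finset.Ioo 0 p) := by
      rw [f_eq_hh]
      exact hh_ext p (by simp) _ _ (fun i => by
        simp only [List.get_eq_getElem, List.getElem_dropLast, Fin.coe_cast,
          Fin.coe_castSucc]) _
    have A5 : (x :: t).headD 0 = (x :: t).get (0 : Fin (t.length + 1)) := rfl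
    have A6 : (x :: t).getLastD 0 = (x :: t).get (Fin.last t.length) := by
      simp [List.get_eq_getElem, List.getLastD_eq_getLast?, List.getLast?_eq_getElem?,
        Fin.last]
    rw [A1, A2, A3, A4, A5, A6]
    exact key p t.length ((x :: t).get)
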